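/- Let M(x) = ∑_{n≥0} M_n x^n be the generating function of the Motzkin numbers, satisfying M(x) = 1 + x·M(x) + x²·M(x)². Then for integers m ≥ λ ≥ 1, (m/λ)·[x^{m-λ}] M(x)^λ = [t^{m-λ}] (1+t+t²)^m. -/

import Mathlib

open PowerSeries

noncomputable def auxT (n i : ℕ) : ℚ :=
  PowerSeries.coeff (R := ℚ) i ((1 + PowerSeries.X + PowerSeries.X ^ 2 : PowerSeries ℚ) ^ n)

lemma coeff_natCast_mul' (k : ℕ) (n : ℕ) (f : PowerSeries ℚ) :
    coeff (R := ℚ) n ((k : PowerSeries ℚ) * f) = (k : ℚ) * coeff (R := ℚ) n f := by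
  rw [← map_natCast (C (R := ℚ)) k, coeff_C_mul]

lemma auxT_zero (n : ℕ) : auxT n 0 = 1 := by
  unfold auxT
  rw [coeff_zero_eq_constantCoeff_apply, map_pow]
  simp

lemma auxT_succ2 (n i : ℕ) : auxT (n+1) (i+2) = auxT n (i+2) + auxT n (i+1) + auxT n i := by
  unfold auxT
  rw [pow_succ, mul_add, mul_add, mul_one, map_add, map_add]
  congr 1
  · congr 1
    rw [mul_comm, show i + 2 = (i+1) + 1 from rfl, coeff_succ_X_mul]
  · rw [mul_comm]
    exact coeff_X_pow_mul _ 2 i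

lemma auxT_succ1 (n : ℕ) : auxT (n+1) 1 = auxT n 1 + auxT n 0 := by
  unfold auxT
  rw [pow_succ, mul_add, mul_add, mul_one, map_add, map_add]
  rw [mul_comm _ (X : PowerSeries ℚ), coeff_succ_X_mul]
  rw [mul_comm _ ((X : PowerSeries ℚ)^2)]
  have h0 : coeff (R := ℚ) 1 ((X : PowerSeries ℚ)^2 * (1 + X + X^2)^n) = 0 :=
    (X_pow_dvd_iff (n := 2)).mp ⟨_, rfl⟩ 1 (by norm_num)
  rw [h0, add_zero]

lemma auxT_one (n : ℕ) : auxT n 1 = (n : ℚ) := by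
  induction n with
  | zero => unfold auxT; simp
  | succ k ih => rw [auxT_succ1, ih, auxT_zero]; push_cast; ring

lemma derivPhi : d⁄dX ℚ (1 + X + X^2 : PowerSeries ℚ) = 1 + 2*X := by
  rw [map_add, map_add, Derivation.map_one_eq_zero, derivative_X, Derivation.leibniz_pow]
  simp only [nsmul_eq_mul, smul_eq_mul, pow_one, derivative_X, mul_one]
  push_cast; ring

lemma auxSI2 (n : ℕ) : (1 + X + X^2 : PowerSeries ℚ) * d⁄dX ℚ ((1 + X + X^2)^n)
    = (n : PowerSeries ℚ) * (1 + 2*X) * (1 + X + X^2)^n := by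
  rcases n with _ | k
  · simp
  · rw [Derivation.leibniz_pow, derivPhi]
    simp only [nsmul_eq_mul, smul_eq_mul, Nat.add_sub_cancel]
    push_cast; ring

lemma auxTD (n j : ℕ) : ((j:ℚ)+2) * auxT n (j+2)
    = ((n:ℚ)-1-(j:ℚ)) * auxT n (j+1) + (2*(n:ℚ)-(j:ℚ)) * auxT n j := by
  have h := congrArg (coeff (R := ℚ) (j+1)) (auxSI2 n)
  rw [show (1+X+X^2 : PowerSeries ℚ) * d⁄dX ℚ ((1+X+X^2)^n)
      = d⁄dX ℚ ((1+X+X^2)^n) + X * d⁄dX ℚ ((1+X+X^2)^n)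
        + X^2 * d⁄dX ℚ ((1+X+X^2)^n) from by ring,
     show (n : PowerSeries ℚ) * (1+2*X) * (1+X+X^2)^n
      = (n : PowerSeries ℚ) * ((1+X+X^2)^n + (X*(1+X+X^2)^n + X*(1+X+X^2)^n)) from by ring] at h
  simp only [map_add, coeff_succ_X_mul, coeff_natCast_mul', coeff_derivative] at h
  rcases j with _ | q
  · have h2 : coeff (R := ℚ) 1 ((X:PowerSeries ℚ)^2 * d⁄dX ℚ ((1+X+X^2)^n)) = 0 :=
      (X_pow_dvd_iff (n:=2)).mp ⟨_, rfl⟩ 1 (by norm_num)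
    rw [h2] at h
    unfold auxT
    linear_combination h
  · have h2 : coeff (R := ℚ) (q+1+1) ((X:PowerSeries ℚ)^2 * d⁄dX ℚ ((1+X+X^2)^n))
        = coeff (R := ℚ) (q+1) ((1+X+X^2:PowerSeries ℚ)^n) * (q+1) := by
      rw [show q+1+1 = q+2 from rfl, coeff_X_pow_mul, coeff_derivative]
    rw [h2] at h
    unfold auxT
    norm_num at h ⊢
    linear_combination h

/-- Let `M` be the generating function of the Motzkin numbers, i.e. the (unique) power
series satisfying `M = 1 + x·M + x²·M²`.  Then for `m ≥ λ ≥ 1`,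
`(m/λ)·[x^(m-λ)] M^λ = [t^(m-λ)] (1+t+t²)^m`. -/
theorem stmt_2 (M : PowerSeries ℚ)
    (hM : M = 1 + PowerSeries.X * M + PowerSeries.X ^ 2 * M ^ 2)
    (m lam : ℕ) (h1 : 1 ≤ lam) (h : lam ≤ m) :
    (m : ℚ) / (lam : ℚ) * (PowerSeries.coeff (R := ℚ) (m - lam)) (M ^ lam)
      = (PowerSeries.coeff (R := ℚ) (m - lam))
          ((1 + PowerSeries.X + PowerSeries.X ^ 2) ^ m) := by
  set N : PowerSeries ℚ := X * M with hNdef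
  have hN : N = X * (1 + N + N^2) := by
    rw [hNdef]; conv_lhs => rw [hM]
    ring
  have ha0 : ∀ k μ : ℕ, k < μ → coeff (R := ℚ) k (N^μ) = 0 := by
    intro k μ hk
    refine (X_pow_dvd_iff (n := μ)).mp ⟨M^μ, ?_⟩ k hk
    rw [hNdef]; ring
  have hD : d⁄dX ℚ N = (1+N+N^2) + X * (1+2*N) * d⁄dX ℚ N := by
    conv_lhs => rw [hN]
    rw [Derivation.leibniz]
    simp only [smul_eq_mul, map_add, Derivation.map_one_eq_zero, derivative_X,
      Derivation.leibniz_pow, nsmul_eq_mul, pow_one]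
    push_cast; ring
  have hSI1 : ∀ μ : ℕ,
      ((μ+2 : ℕ) : PowerSeries ℚ) * d⁄dX ℚ (N^(μ+1))
        = (((μ+1)*(μ+2) : ℕ) : PowerSeries ℚ) * (N^μ + N^(μ+1) + N^(μ+2))
          + X * (((μ+2 : ℕ) : PowerSeries ℚ) * d⁄dX ℚ (N^(μ+1))
                 + ((2*(μ+1) : ℕ) : PowerSeries ℚ) * d⁄dX ℚ (N^(μ+2))) := by
    intro μ
    rw [Derivation.leibniz_pow, Derivation.leibniz_pow]
    simp only [Nat.add_sub_cancel, show ∀ a : ℕ, a+2-1 = a+1 from fun a => rfl,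
      nsmul_eq_mul, smul_eq_mul]
    conv_lhs => rw [hD]
    push_cast; ring
  have main : ∀ n μ j : ℕ, μ + 1 + j = n →
      (n : ℚ) * coeff (R := ℚ) n (N^(μ+1)) = ((μ:ℚ)+1) * auxT n j := by
    intro n
    induction n with
    | zero => intro μ j hj; omega
    | succ n ih =>
      intro μ j hj
      rcases Nat.eq_zero_or_pos n with rfl | hn
      · obtain ⟨rfl, rfl⟩ : μ = 0 ∧ j = 0 := by omega
        have hc1 : coeff (R := ℚ) 1 (N^(0+1)) = 1 := by
          rw [pow_one, hNdef, show (1:ℕ) = 0 + 1 from rfl, coeff_succ_X_mul,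
            coeff_zero_eq_constantCoeff_apply]
          have hc0 : constantCoeff (R := ℚ) N = 0 := by rw [hNdef]; simp
          have hc := congrArg (constantCoeff (R := ℚ)) hM
          simp [hc0] at hc
          rw [hc]
        rw [hc1, auxT_zero]
        norm_num
      · obtain ⟨p, rfl⟩ : ∃ p, n = p + 1 := ⟨n-1, by omega⟩
        have hE := congrArg (coeff (R := ℚ) (p+1)) (hSI1 μ)
        simp only [map_add, coeff_natCast_mul', coeff_succ_X_mul, coeff_derivative] at hE
        have hB0 : ((p+1:ℕ):ℚ) * coeff (R := ℚ) (p+1) (N^μ) = (μ:ℚ) * auxT (p+1) j := by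
          rcases μ with _ | μ'
          · simp [coeff_one]
          · have h' := ih μ' j (by omega)
            push_cast at h' ⊢
            linear_combination h'
        have hnz : ((p:ℚ)+1) * ((μ:ℚ)+2) ≠ 0 := by positivity
        rcases Nat.lt_or_ge j 2 with hj2 | hj2
        · interval_cases j
          · -- j = 0, μ = p + 1
            obtain rfl : μ = p + 1 := by omega
            have hB1 : coeff (R := ℚ) (p+1) (N^(p+1+1)) = 0 := ha0 (p+1) (p+1+1) (by omega)
            have hB2 : coeff (R := ℚ) (p+1) (N^(p+1+2)) = 0 := ha0 (p+1) (p+1+2) (by omega)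
            rw [hB1, hB2] at hE
            rw [auxT_zero] at hB0 ⊢
            refine mul_left_cancel₀ hnz ?_
            push_cast at hE hB0 ⊢
            linear_combination ((p:ℚ)+1)*hE + ((p:ℚ)+2)*((p:ℚ)+3)*hB0
          · -- j = 1, μ = p
            have hpm : μ = p := by omega
            rw [hpm] at hB0 hE hnz ⊢
            have hB1 := ih p 0 (by omega)
            have hB2 : coeff (R := ℚ) (p+1) (N^(p+2)) = 0 := ha0 (p+1) (p+2) (by omega)
            rw [show p+2 = p+1+1 from rfl] at hB2
            rw [hB2] at hE
            rw [auxT_zero] at hB1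
            rw [auxT_one] at hB0
            rw [auxT_succ1, auxT_one, auxT_zero]
            refine mul_left_cancel₀ hnz ?_
            push_cast at hE hB0 hB1 ⊢
            linear_combination ((p:ℚ)+1)*hE + ((p:ℚ)+1)*((p:ℚ)+2)*hB0
              + (((p:ℚ)+1)*((p:ℚ)+2)+((p:ℚ)+1)*((p:ℚ)+2))*hB1
        · obtain ⟨jj, rfl⟩ : ∃ jj, j = jj+2 := ⟨j-2, by omega⟩
          obtain rfl : p = μ + jj + 1 := by omega
          have hB1 := ih μ (jj+1) (by omega)
          have hB2' := ih (μ+1) jj (by omega)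
          rw [show μ+1+1 = μ+2 from rfl] at hB2'
          have hTD := auxTD (μ+jj+1+1) jj
          have hTrec := auxT_succ2 (μ+jj+1+1) jj
          refine mul_left_cancel₀ hnz ?_
          push_cast at hE hB0 hB1 hB2' hTD hTrec ⊢
          linear_combination ((μ:ℚ)+(jj:ℚ)+2)*hE
            + ((μ:ℚ)+1)*((μ:ℚ)+2)*hB0
            + (((μ:ℚ)+1)*((μ:ℚ)+2)+((μ:ℚ)+(jj:ℚ)+2)*((μ:ℚ)+2))*hB1
            + (((μ:ℚ)+1)*((μ:ℚ)+2)+2*((μ:ℚ)+(jj:ℚ)+2)*((μ:ℚ)+1))*hB2'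
            - ((μ:ℚ)+1)*((μ:ℚ)+2)*hTD
            - ((μ:ℚ)+(jj:ℚ)+2)*((μ:ℚ)+1)*((μ:ℚ)+2)*hTrec
  -- conclude
  obtain ⟨μ, rfl⟩ : ∃ μ, lam = μ + 1 := ⟨lam - 1, by omega⟩
  set j := m - (μ+1) with hjdef
  have hmj : μ + 1 + j = m := by omega
  have hmain := main m μ j hmj
  have hco : coeff (R := ℚ) m (N^(μ+1)) = coeff (R := ℚ) j (M^(μ+1)) := by
    rw [hNdef, mul_pow, ← hmj, show μ+1+j = j+(μ+1) from by ring]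
    exact coeff_X_pow_mul _ _ _
  rw [hco] at hmain
  have hlnz : ((μ:ℚ)+1) ≠ 0 := by positivity
  show (m:ℚ) / ((μ+1 : ℕ):ℚ) * coeff (R := ℚ) j (M^(μ+1)) = auxT m j
  push_cast at hmain ⊢
  field_simp
  linear_combination hmain
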